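/- Let p, q be nonnegative integers with p ≥ 1 and q ≥ 1. Then ((q+1)·A_{p,q-1}(i,j) + (p+1)·A_{p-1,q}(i,j)) / A_{p,q}(i,j) tends to 0 as both i and j tend to infinity: for every ε > 0 there exist I and J such that this ratio is less than ε whenever i ≥ I and j ≥ J. -/

import Mathlib

/-- The generalized Eulerian number `eulerA p q i j` counts the paths in the Euler graph
from `(p, q)` to `(p + i, q + j)`.  It is defined by the initial conditions
`eulerA p q i 0 = (q+1)^i`, `eulerA p q 0 j = (p+1)^j` and the recurrence
`eulerA p q i j = (j+q+1) * eulerA p q (i-1) j + (i+p+1) * eulerA p q i (j-1)`. -/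
def eulerA (p q : ℕ) : ℕ → ℕ → ℕ
  | i, 0 => (q + 1) ^ i
  | 0, j + 1 => (p + 1) ^ (j + 1)
  | i + 1, j + 1 =>
      (j + 1 + q + 1) * eulerA p q i (j + 1) + (i + 1 + p + 1) * eulerA p q (i + 1) j

lemma eulerA_i0 (p q i : ℕ) : eulerA p q i 0 = (q+1)^i := by rw [eulerA]

lemma eulerA_0j (p q j : ℕ) : eulerA p q 0 (j+1) = (p+1)^(j+1) := by rw [eulerA]

lemma eulerA_rec (p q i j : ℕ) :
    eulerA p q (i+1) (j+1) = (j+q+2) * eulerA p q i (j+1) + (i+p+2) * eulerA p q (i+1) j := by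
  rw [eulerA]; ring

theorem eulerA_pos (p q i j : ℕ) : 0 < eulerA p q i j := by
  induction i, j using eulerA.induct with
  | case1 i => rw [eulerA]; positivity
  | case2 j => rw [eulerA]; positivity
  | case3 i j h1 h2 => rw [eulerA]; positivity

lemma eulerA_symm (p q : ℕ) : ∀ i j, eulerA p q i j = eulerA q p j i := by
  intro i j
  induction i, j using eulerA.induct with
  | case1 i =>
    cases i with
    | zero => rw [eulerA_i0, eulerA_i0, pow_zero, pow_zero]
    | succ k => rw [eulerA_i0, eulerA_0j]
  | case2 j => rw [eulerA_0j, eulerA_i0]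
  | case3 i j h1 h2 => rw [eulerA_rec, eulerA_rec, h1, h2]; ring

lemma eulerA_row1 (p q : ℕ) : ∀ i : ℕ,
    (eulerA p q i 1 : ℤ) + ((i:ℤ)+p+q+3)*((q:ℤ)+1)^(i+1) = ((p:ℤ)+q+2)*((q:ℤ)+2)^(i+1) := by
  intro i
  induction i with
  | zero =>
    have h : eulerA p q 0 1 = (p+1)^(0+1) := eulerA_0j p q 0
    rw [h]; push_cast; ring
  | succ i ih =>
    have hrec : eulerA p q (i+1) 1 = (q+2) * eulerA p q i 1 + (i+p+2)*(q+1)^(i+1) := by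
      have h := eulerA_rec p q i 0
      simpa [eulerA_i0] using h
    rw [hrec]; push_cast
    linear_combination ((q:ℤ)+2) * ih

lemma eulerA_key (p q : ℕ) : ∀ i j : ℕ,
    ((p:ℤ)+q+2) * (eulerA p (q+1) (i+1) j : ℤ)
      = ((i:ℤ)+p+q+3) * (eulerA p q (i+1) j : ℤ) + ((j:ℤ)+1) * (eulerA p q i (j+1) : ℤ) := by
  intro i
  induction i with
  | zero =>
    intro j
    induction j with
    | zero =>
      have hA := eulerA_i0 p (q+1) (0+1)
      have hB := eulerA_i0 p q (0+1)
      have hC := eulerA_0j p q 0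
      rw [hA, hB, hC]; push_cast; ring
    | succ j ih =>
      have h1 := eulerA_rec p (q+1) 0 j
      have h2 := eulerA_0j p (q+1) j
      have h3 := eulerA_rec p q 0 j
      have h4 : (eulerA p q 0 (j+1) : ℤ) = ((p:ℤ)+1)^(j+1) := by exact_mod_cast congrArg (Nat.cast (R := ℤ)) (eulerA_0j p q j)
      have h5 := eulerA_0j p q (j+1)
      rw [h1, h2, h3, h5]; push_cast at ih ⊢
      linear_combination ((p:ℤ)+2) * ih + (((p:ℤ)+2)*((j:ℤ)+1) - ((p:ℤ)+q+3)*((j:ℤ)+q+2)) * h4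
  | succ i ihi =>
    intro j
    induction j with
    | zero =>
      have hX := eulerA_i0 p (q+1) (i+1+1)
      have hY := eulerA_i0 p q (i+1+1)
      have hrow := eulerA_row1 p q (i+1)
      simp only [Nat.zero_add]
      rw [hX, hY]; push_cast at hrow ⊢
      linear_combination -hrow
    | succ j ihj =>
      have h1 := eulerA_rec p (q+1) (i+1) j
      have h2 := eulerA_rec p q (i+1) j
      have h3 := eulerA_rec p q i (j+1)
      have hi := ihi (j+1)
      rw [h1, h2, h3]; push_cast at hi ihj ⊢
      linear_combination ((j:ℤ)+q+3) * hi + ((i:ℤ)+p+3) * ihj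

lemma eulerA_mono_q (p q i j : ℕ) :
    (i+p+q+2) * eulerA p q i j ≤ (p+q+2) * eulerA p (q+1) i j := by
  cases i with
  | zero =>
    have h : eulerA p q 0 j = eulerA p (q+1) 0 j := by
      cases j with
      | zero => rw [eulerA_i0, eulerA_i0, pow_zero, pow_zero]
      | succ j => rw [eulerA_0j, eulerA_0j]
    simp [h]
  | succ i =>
    have hk := eulerA_key p q i j
    have hpos : (0:ℤ) ≤ ((j:ℤ)+1) * (eulerA p q i (j+1) : ℤ) := by positivity
    zify
    push_cast at hk ⊢
    linarith [hk, hpos]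

lemma eulerA_mono_p (p q i j : ℕ) :
    (j+p+q+2) * eulerA p q i j ≤ (p+q+2) * eulerA (p+1) q i j := by
  rw [eulerA_symm p q i j, eulerA_symm (p+1) q i j]
  have h := eulerA_mono_q q p j i
  have e1 : j+q+p+2 = j+p+q+2 := by ring
  have e2 : q+p+2 = p+q+2 := by ring
  rw [e1, e2] at h
  exact h

theorem stmt11 (p q : ℕ) (hp : 1 ≤ p) (hq : 1 ≤ q) :
    ∀ ε : ℝ, 0 < ε → ∃ I J : ℕ, ∀ i j : ℕ, I ≤ i → J ≤ j →
      (((q : ℝ) + 1) * (eulerA p (q - 1) i j) + ((p : ℝ) + 1) * (eulerA (p - 1) q i j)) /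
          (eulerA p q i j) < ε := by
  intro ε hε
  obtain ⟨p', rfl⟩ : ∃ p', p = p'+1 := ⟨p-1, by omega⟩
  obtain ⟨q', rfl⟩ : ∃ q', q = q'+1 := ⟨q-1, by omega⟩
  obtain ⟨N, hN⟩ := exists_nat_gt ((2*((p':ℝ)+q'+4)*((p':ℝ)+q'+3))/ε)
  refine ⟨N+1, N+1, fun i j hi hj => ?_⟩
  simp only [Nat.add_sub_cancel]
  set A := eulerA (p'+1) (q'+1) i j with hA
  set B := eulerA (p'+1) q' i j with hB
  set C := eulerA p' (q'+1) i j with hC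
  have hApos : (0:ℝ) < A := by exact_mod_cast eulerA_pos (p'+1) (q'+1) i j
  have hBpos : (0:ℝ) ≤ B := by positivity
  have hCpos : (0:ℝ) ≤ C := by positivity
  have hwpos : (0:ℝ) < ((p':ℝ)+q'+3) := by positivity
  have hmB : ((i:ℝ) + ((p':ℝ)+q'+3)) * B ≤ ((p':ℝ)+q'+3) * A := by
    have h := eulerA_mono_q (p'+1) q' i j
    have h2 := (Nat.cast_le (α := ℝ)).mpr h
    push_cast at h2
    linarith
  have hmC : ((j:ℝ) + ((p':ℝ)+q'+3)) * C ≤ ((p':ℝ)+q'+3) * A := by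
    have h := eulerA_mono_p p' (q'+1) i j
    have h2 := (Nat.cast_le (α := ℝ)).mpr h
    push_cast at h2
    linarith
  have hiR : (N:ℝ) + 1 ≤ i := by exact_mod_cast hi
  have hjR : (N:ℝ) + 1 ≤ j := by exact_mod_cast hj
  have hNe : 2*((p':ℝ)+q'+4)*((p':ℝ)+q'+3) < ε * N := by
    have := (div_lt_iff₀ hε).mp hN
    linarith [mul_comm (N:ℝ) ε]
  have hKi : 2*((p':ℝ)+q'+4)*((p':ℝ)+q'+3) < ε * i := by
    have : ε * N ≤ ε * i := by
      apply mul_le_mul_of_nonneg_left _ hε.le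
      linarith
    linarith
  have hKj : 2*((p':ℝ)+q'+4)*((p':ℝ)+q'+3) < ε * j := by
    have : ε * N ≤ ε * j := by
      apply mul_le_mul_of_nonneg_left _ hε.le
      linarith
    linarith
  rw [div_lt_iff₀ hApos]
  push_cast
  have hBb : ((q':ℝ)+2) * B < (ε/2) * A := by
    have h1 : ((q':ℝ)+2) * (((i:ℝ)+((p':ℝ)+q'+3)) * B) ≤ ((q':ℝ)+2) * (((p':ℝ)+q'+3) * A) :=
      mul_le_mul_of_nonneg_left hmB (by positivity)
    have h2 : 2*((q':ℝ)+2) * ((p':ℝ)+q'+3) < ε * ((i:ℝ)+((p':ℝ)+q'+3)) := by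
      have hq2 : ((q':ℝ)+2) ≤ (p':ℝ)+q'+4 := by linarith [Nat.cast_nonneg (α := ℝ) p']
      nlinarith [mul_pos hε hwpos]
    have h4 := mul_lt_mul_of_pos_right h2 hApos
    have h3 : ((q':ℝ)+2) * B * ((i:ℝ)+((p':ℝ)+q'+3)) < (ε/2) * A * ((i:ℝ)+((p':ℝ)+q'+3)) := by
      linarith [h1, h4]
    exact lt_of_mul_lt_mul_right h3 (by positivity)
  have hCb : ((p':ℝ)+2) * C < (ε/2) * A := by
    have h1 : ((p':ℝ)+2) * (((j:ℝ)+((p':ℝ)+q'+3)) * C) ≤ ((p':ℝ)+2) * (((p':ℝ)+q'+3) * A) :=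
      mul_le_mul_of_nonneg_left hmC (by positivity)
    have h2 : 2*((p':ℝ)+2) * ((p':ℝ)+q'+3) < ε * ((j:ℝ)+((p':ℝ)+q'+3)) := by
      have hp2 : ((p':ℝ)+2) ≤ (p':ℝ)+q'+4 := by linarith [Nat.cast_nonneg (α := ℝ) q']
      nlinarith [mul_pos hε hwpos]
    have h4 := mul_lt_mul_of_pos_right h2 hApos
    have h3 : ((p':ℝ)+2) * C * ((j:ℝ)+((p':ℝ)+q'+3)) < (ε/2) * A * ((j:ℝ)+((p':ℝ)+q'+3)) := by
      linarith [h1, h4]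
    exact lt_of_mul_lt_mul_right h3 (by positivity)
  linarith
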